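/- Let n ≥ 1 and 0 < λ < n. There is a constant C such that ‖Mf‖_{WL^{1,λ}(|x|^{λ−n})} ≤ C ‖f‖_{L^{1,λ}(|x|^{λ−n})} for every f with ‖f‖_{L^{1,λ}(|x|^{λ−n})} < ∞; that is, the Hardy–Littlewood maximal operator M is bounded from L^{1,λ}(|x|^{λ−n}) to the weak Morrey space WL^{1,λ}(|x|^{λ−n}). -/

import Mathlib

open MeasureTheory Metric ENNReal NNReal Topology Filter

noncomputable section

/-- Euclidean space ℝⁿ. -/
abbrev Euc (n : ℕ) := EuclideanSpace ℝ (Fin n)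

/-- A weight on ℝⁿ: a nonnegative locally integrable function. -/
def IsWeight (n : ℕ) (w : Euc n → ℝ) : Prop :=
  (∀ x, 0 ≤ w x) ∧ LocallyIntegrable w volume

/-- `w(A) = ∫_A w`. -/
def wInt (n : ℕ) (w : Euc n → ℝ) (s : Set (Euc n)) : ℝ≥0∞ :=
  ∫⁻ y in s, ENNReal.ofReal (w y)

/-- The `A_q` constant for `1 < q`:
`sup_B (w(B)/|B|) ((w^{1-q'}(B))/|B|)^{q-1}` with `q' = q/(q-1)`. -/
def ApConst (n : ℕ) (q : ℝ) (w : Euc n → ℝ) : ℝ≥0∞ :=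
  ⨆ (x : Euc n) (r : ℝ) (_ : 0 < r),
    (wInt n w (ball x r) / volume (ball x r)) *
      (wInt n (fun y => w y ^ (1 - q / (q - 1))) (ball x r) / volume (ball x r)) ^ (q - 1)

/-- The `A_1` constant: the least `c` such that for every ball `B`,
`w(B)/|B| ≤ c w(x)` for a.e. `x ∈ B`. -/
def A1Const (n : ℕ) (w : Euc n → ℝ) : ℝ≥0∞ :=
  sInf {c : ℝ≥0∞ | ∀ (x : Euc n) (r : ℝ), 0 < r →
    ∀ᵐ y ∂(volume.restrict (ball x r)),
      wInt n w (ball x r) / volume (ball x r) ≤ c * ENNReal.ofReal (w y)}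

/-- The Muckenhoupt constant `[w]_{A_q}` (for `q = 1` the `A_1` constant). -/
def muckConst (n : ℕ) (q : ℝ) (w : Euc n → ℝ) : ℝ≥0∞ :=
  if q = 1 then A1Const n w else ApConst n q w

/-- Membership in the Muckenhoupt class `A_q`. -/
def MemAp (n : ℕ) (q : ℝ) (w : Euc n → ℝ) : Prop := muckConst n q w < ⊤

/-- The reverse Hölder `RH_σ` constant: the least `c` such that
`(|B|⁻¹ ∫_B w^σ)^{1/σ} ≤ c |B|⁻¹ ∫_B w` for all balls `B`. -/
def RHConst (n : ℕ) (σ : ℝ) (w : Euc n → ℝ) : ℝ≥0∞ :=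
  sInf {c : ℝ≥0∞ | ∀ (x : Euc n) (r : ℝ), 0 < r →
    ((volume (ball x r))⁻¹ * ∫⁻ y in ball x r, ENNReal.ofReal (w y ^ σ)) ^ (1 / σ) ≤
      c * ((volume (ball x r))⁻¹ * wInt n w (ball x r))}

/-- Membership in the reverse Hölder class `RH_σ`. -/
def MemRH (n : ℕ) (σ : ℝ) (w : Euc n → ℝ) : Prop := RHConst n σ w < ⊤

/-- `‖f‖_{L^p(w)} = (∫ |f|^p w)^{1/p}`. -/
def lpNorm (n : ℕ) (p : ℝ) (w f : Euc n → ℝ) : ℝ≥0∞ :=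
  (∫⁻ x, ENNReal.ofReal (|f x| ^ p * w x)) ^ (1 / p)

/-- `‖g‖_{L^{p,∞}(w)} = sup_{t>0} t (w{|g|>t})^{1/p}`. -/
def weakLpNorm (n : ℕ) (p : ℝ) (w g : Euc n → ℝ) : ℝ≥0∞ :=
  ⨆ (t : ℝ) (_ : 0 < t), ENNReal.ofReal t * (wInt n w {x | t < |g x|}) ^ (1 / p)

/-- The Morrey norm `‖f‖_{L^{p,λ}(u)} = sup_{x,r>0} (r^{-λ} ∫_{B(x,r)} |f|^p u)^{1/p}`. -/
def morreyNorm (n : ℕ) (p lam : ℝ) (u f : Euc n → ℝ) : ℝ≥0∞ :=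
  ⨆ (x : Euc n) (r : ℝ) (_ : 0 < r),
    (ENNReal.ofReal (r ^ (-lam)) *
      ∫⁻ y in ball x r, ENNReal.ofReal (|f y| ^ p * u y)) ^ (1 / p)

/-- The weak Morrey norm
`‖f‖_{WL^{p,λ}(u)} = sup_{x,r>0,t>0} (t^p u({y ∈ B(x,r) : |f y| > t}) / r^λ)^{1/p}`. -/
def weakMorreyNorm (n : ℕ) (p lam : ℝ) (u f : Euc n → ℝ) : ℝ≥0∞ :=
  ⨆ (x : Euc n) (r : ℝ) (_ : 0 < r) (t : ℝ) (_ : 0 < t),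
    (ENNReal.ofReal (t ^ p) * ENNReal.ofReal (r ^ (-lam)) *
      wInt n u {y ∈ ball x r | t < |f y|}) ^ (1 / p)

/-- The Hardy–Littlewood maximal function `Mf(x) = sup_{B ∋ x} |B|⁻¹ ∫_B |f|`. -/
def maximal (n : ℕ) (f : Euc n → ℝ) (x : Euc n) : ℝ≥0∞ :=
  ⨆ (z : Euc n) (r : ℝ) (_ : 0 < r) (_ : x ∈ ball z r),
    (volume (ball z r))⁻¹ * ∫⁻ y in ball z r, ENNReal.ofReal |f y|

/-- Morrey norm for an `ℝ≥0∞`-valued function (e.g. a maximal function). -/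
def morreyNormE (n : ℕ) (p lam : ℝ) (u : Euc n → ℝ) (g : Euc n → ℝ≥0∞) : ℝ≥0∞ :=
  ⨆ (x : Euc n) (r : ℝ) (_ : 0 < r),
    (ENNReal.ofReal (r ^ (-lam)) *
      ∫⁻ y in ball x r, (g y) ^ p * ENNReal.ofReal (u y)) ^ (1 / p)

/-- Weak Morrey norm for an `ℝ≥0∞`-valued function (e.g. a maximal function). -/
def weakMorreyNormE (n : ℕ) (p lam : ℝ) (u : Euc n → ℝ) (g : Euc n → ℝ≥0∞) : ℝ≥0∞ :=
  ⨆ (x : Euc n) (r : ℝ) (_ : 0 < r) (t : ℝ) (_ : 0 < t),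
    (ENNReal.ofReal (t ^ p) * ENNReal.ofReal (r ^ (-lam)) *
      wInt n u {y ∈ ball x r | ENNReal.ofReal t < g y}) ^ (1 / p)

end

noncomputable section
namespace S19
variable {n : ℕ} {lam : ℝ}

lemma nontriv (hn : 1 ≤ n) : Nontrivial (Euc n) := by
  have : 0 < Module.finrank ℝ (Euc n) := by
    rw [finrank_euclideanSpace_fin]; omega
  exact Module.nontrivial_of_finrank_pos this

lemma vol_ball (hn : 1 ≤ n) (x : Euc n) {r : ℝ} (hr : 0 ≤ r) :
    volume (ball x r) = ENNReal.ofReal (r ^ n) * volume (ball (0 : Euc n) 1) := by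
  haveI := nontriv hn
  rw [Measure.addHaar_ball volume x hr, finrank_euclideanSpace_fin]

lemma V1_pos (hn : 1 ≤ n) : 0 < volume (ball (0 : Euc n) 1) := measure_ball_pos _ _ one_pos
lemma V1_lt_top : volume (ball (0 : Euc n) 1) < ⊤ := measure_ball_lt_top

variable {n : ℕ} {lam : ℝ}

def c0 (n : ℕ) (lam : ℝ) : ℝ≥0∞ :=
  volume (ball (0 : Euc n) 1) * ENNReal.ofReal ((2:ℝ) ^ ((n:ℝ) - lam)) *
    (1 - ENNReal.ofReal ((2⁻¹:ℝ) ^ lam))⁻¹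

lemma q_lt_one (hlam0 : 0 < lam) : ENNReal.ofReal ((2⁻¹:ℝ) ^ lam) < 1 := by
  have h : ((2:ℝ)⁻¹) ^ lam < 1 :=
    Real.rpow_lt_one (by norm_num) (by norm_num) hlam0
  calc ENNReal.ofReal ((2⁻¹:ℝ) ^ lam) < ENNReal.ofReal 1 :=
        ENNReal.ofReal_lt_ofReal_iff_of_nonneg (Real.rpow_nonneg (by norm_num) _) |>.2 h
    _ = 1 := ENNReal.ofReal_one

lemma c0_lt_top (hlam0 : 0 < lam) : c0 n lam < ⊤ := by
  have h1 : (1 - ENNReal.ofReal ((2⁻¹:ℝ) ^ lam)) ≠ 0 :=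
    (tsub_pos_of_lt (q_lt_one hlam0)).ne'
  exact ENNReal.mul_lt_top (ENNReal.mul_lt_top measure_ball_lt_top ENNReal.ofReal_lt_top)
    (ENNReal.inv_lt_top.2 (pos_iff_ne_zero.2 h1))

lemma core (hn : 1 ≤ n) (hlam0 : 0 < lam) (hlam : lam < n) {R : ℝ} (hR : 0 < R) :
    ∫⁻ y in ball (0 : Euc n) R, ENNReal.ofReal (‖y‖ ^ (lam - n)) ≤
      c0 n lam * ENNReal.ofReal (R ^ lam) := by
  haveI := nontriv hn
  set V1 := volume (ball (0 : Euc n) 1) with hV1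
  set a : ℕ → ℝ := fun k => R * (2⁻¹:ℝ) ^ k with ha_def
  have ha : ∀ k, 0 < a k := fun k => by positivity
  have hsucc : ∀ k, a (k + 1) = a k * 2⁻¹ := fun k => by
    simp only [ha_def, pow_succ]; ring
  set A : ℕ → Set (Euc n) := fun k => {y | a (k+1) ≤ ‖y‖ ∧ ‖y‖ < a k} with hA_def
  have hAmeas : ∀ k, MeasurableSet (A k) := fun k => by
    have : A k = (fun y : Euc n => ‖y‖) ⁻¹' (Set.Ico (a (k+1)) (a k)) := rfl
    rw [this]; exact measurable_norm measurableSet_Ico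
  have cover : ball (0 : Euc n) R ⊆ {0} ∪ ⋃ k, A k := by
    intro y hy
    rcases eq_or_ne y 0 with rfl | hy0
    · exact Set.mem_union_left _ rfl
    · have hy0' : 0 < ‖y‖ := norm_pos_iff.2 hy0
      have hyR : ‖y‖ < R := mem_ball_zero_iff.1 hy
      have hex : ∃ k, a (k + 1) ≤ ‖y‖ := by
        obtain ⟨m, hm⟩ := exists_pow_lt_of_lt_one (div_pos hy0' hR)
          (by norm_num : (2⁻¹:ℝ) < 1)
        refine ⟨m, ?_⟩
        have h1 : a (m+1) ≤ a m := by
          rw [hsucc]; nlinarith [ha m]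
        have h2 : a m < ‖y‖ := by
          have h := mul_lt_mul_of_pos_left hm hR
          calc a m = R * (2⁻¹:ℝ)^m := rfl
            _ < R * (‖y‖ / R) := h
            _ = ‖y‖ := by field_simp
        linarith
      refine Set.mem_union_right _ (Set.mem_iUnion.2 ⟨Nat.find hex, Nat.find_spec hex, ?_⟩)
      rcases Nat.eq_zero_or_pos (Nat.find hex) with h0 | hpos
      · rw [h0]; simpa [ha_def] using hyR
      · obtain ⟨k, hk⟩ := Nat.exists_eq_succ_of_ne_zero hpos.ne'
        rw [hk]
        have := Nat.find_min hex (m := k) (by omega)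
        push_neg at this
        exact this
  have step1 : ∫⁻ y in ball (0 : Euc n) R, ENNReal.ofReal (‖y‖ ^ (lam - n)) ≤
      ∑' k, ∫⁻ y in A k, ENNReal.ofReal (‖y‖ ^ (lam - n)) := by
    calc ∫⁻ y in ball (0 : Euc n) R, ENNReal.ofReal (‖y‖ ^ (lam - n))
        ≤ ∫⁻ y in {(0:Euc n)} ∪ ⋃ k, A k, ENNReal.ofReal (‖y‖ ^ (lam - n)) :=
          lintegral_mono_set cover
      _ ≤ (∫⁻ y in {(0:Euc n)}, ENNReal.ofReal (‖y‖ ^ (lam - n))) +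
          ∫⁻ y in ⋃ k, A k, ENNReal.ofReal (‖y‖ ^ (lam - n)) := lintegral_union_le _ _ _
      _ ≤ 0 + ∑' k, ∫⁻ y in A k, ENNReal.ofReal (‖y‖ ^ (lam - n)) := by
          gcongr
          · exact le_of_eq (setLIntegral_measure_zero _ _ (measure_singleton 0))
          · exact lintegral_iUnion_le _ _
      _ = _ := zero_add _
  have step2 : ∀ k, ∫⁻ y in A k, ENNReal.ofReal (‖y‖ ^ (lam - n)) ≤
      ENNReal.ofReal ((2:ℝ) ^ ((n:ℝ) - lam) * R ^ lam) *
        (ENNReal.ofReal ((2⁻¹:ℝ) ^ lam)) ^ k * V1 := by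
    intro k
    have hb1 : ∫⁻ y in A k, ENNReal.ofReal (‖y‖ ^ (lam - n)) ≤
        ∫⁻ _ in A k, ENNReal.ofReal (a (k+1) ^ (lam - n)) := by
      refine lintegral_mono_ae ?_
      filter_upwards [ae_restrict_mem (hAmeas k)] with y hy
      exact ENNReal.ofReal_le_ofReal
        (Real.rpow_le_rpow_of_nonpos (ha _) hy.1 (by push_cast; linarith))
    have hb2 : volume (A k) ≤ ENNReal.ofReal (a k ^ n) * V1 := by
      rw [← vol_ball hn 0 (ha k).le]
      exact measure_mono (fun y hy => mem_ball_zero_iff.2 hy.2)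
    have key : a (k+1) ^ (lam - (n:ℝ)) * a k ^ (n:ℕ) =
        (2:ℝ) ^ ((n:ℝ) - lam) * R ^ lam * (((2⁻¹:ℝ) ^ lam) ^ k) := by
      have h2 : ((2:ℝ)⁻¹) ^ (lam - (n:ℝ)) = (2:ℝ) ^ ((n:ℝ) - lam) := by
        rw [Real.inv_rpow (by norm_num), ← Real.rpow_neg (by norm_num), neg_sub]
      have h3 : (a k) ^ (lam - (n:ℝ)) * (a k) ^ (n:ℕ) = (a k) ^ lam := by
        rw [← Real.rpow_natCast (a k) n, ← Real.rpow_add (ha k), sub_add_cancel]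
      have h4 : (a k) ^ lam = R ^ lam * (((2⁻¹:ℝ) ^ lam) ^ k) := by
        have hak : a k = R * (2⁻¹:ℝ)^k := rfl
        rw [hak, Real.mul_rpow hR.le (by positivity), ← Real.rpow_natCast (2⁻¹:ℝ) k,
          ← Real.rpow_mul (by norm_num), mul_comm (k:ℝ) lam, Real.rpow_mul (by norm_num),
          Real.rpow_natCast]
      rw [hsucc k, Real.mul_rpow (ha k).le (by norm_num), h2]
      calc (a k)^(lam - (n:ℝ)) * 2^((n:ℝ)-lam) * (a k)^(n:ℕ)
          = ((a k)^(lam-(n:ℝ)) * (a k)^(n:ℕ)) * 2^((n:ℝ)-lam) := by ring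
        _ = _ := by rw [h3, h4]; ring
    calc ∫⁻ y in A k, ENNReal.ofReal (‖y‖ ^ (lam - n))
        ≤ ENNReal.ofReal (a (k+1) ^ (lam - n)) * volume (A k) := by
          rw [← setLIntegral_const]; exact hb1
      _ ≤ ENNReal.ofReal (a (k+1) ^ (lam - n)) * (ENNReal.ofReal (a k ^ n) * V1) := by
          gcongr
      _ = ENNReal.ofReal (a (k+1) ^ (lam - n) * a k ^ n) * V1 := by
          rw [← mul_assoc, ← ENNReal.ofReal_mul (Real.rpow_nonneg (ha _).le _)]
      _ = ENNReal.ofReal ((2:ℝ) ^ ((n:ℝ) - lam) * R ^ lam * (((2⁻¹:ℝ) ^ lam) ^ k)) * V1 := by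
          rw [key]
      _ = ENNReal.ofReal ((2:ℝ) ^ ((n:ℝ) - lam) * R ^ lam) *
            (ENNReal.ofReal ((2⁻¹:ℝ) ^ lam)) ^ k * V1 := by
          rw [ENNReal.ofReal_mul (by positivity), ENNReal.ofReal_pow (Real.rpow_nonneg (by norm_num) _)]
  have hsplit : ENNReal.ofReal ((2:ℝ)^((n:ℝ)-lam) * R^lam) =
      ENNReal.ofReal ((2:ℝ)^((n:ℝ)-lam)) * ENNReal.ofReal (R^lam) :=
    ENNReal.ofReal_mul (by positivity)
  calc ∫⁻ y in ball (0 : Euc n) R, ENNReal.ofReal (‖y‖ ^ (lam - n))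
      ≤ ∑' k, ∫⁻ y in A k, ENNReal.ofReal (‖y‖ ^ (lam - n)) := step1
    _ ≤ ∑' k, ENNReal.ofReal ((2:ℝ) ^ ((n:ℝ) - lam) * R ^ lam) *
          (ENNReal.ofReal ((2⁻¹:ℝ) ^ lam)) ^ k * V1 := ENNReal.tsum_le_tsum step2
    _ = ENNReal.ofReal ((2:ℝ) ^ ((n:ℝ) - lam) * R ^ lam) *
          (1 - ENNReal.ofReal ((2⁻¹:ℝ) ^ lam))⁻¹ * V1 := by
        rw [ENNReal.tsum_mul_right, ENNReal.tsum_mul_left, ENNReal.tsum_geometric]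
    _ = c0 n lam * ENNReal.ofReal (R ^ lam) := by
        rw [hsplit, c0, hV1]; ring

lemma rpow_sub_nat {r : ℝ} (hr : 0 < r) : r ^ (lam - (n:ℝ)) * r ^ (n:ℕ) = r ^ lam := by
  rw [← Real.rpow_natCast r n, ← Real.rpow_add hr, sub_add_cancel]

lemma inv_two_rpow : ((2:ℝ)⁻¹) ^ (lam - (n:ℝ)) = (2:ℝ) ^ ((n:ℝ) - lam) := by
  rw [Real.inv_rpow (by norm_num), ← Real.rpow_neg (by norm_num), neg_sub]

def Cw (n : ℕ) (lam : ℝ) : ℝ≥0∞ :=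
  c0 n lam * ENNReal.ofReal ((3:ℝ) ^ lam) + volume (ball (0 : Euc n) 1)

lemma Cw_lt_top (hlam0 : 0 < lam) : Cw n lam < ⊤ :=
  ENNReal.add_lt_top.2 ⟨ENNReal.mul_lt_top (c0_lt_top hlam0) ENNReal.ofReal_lt_top,
    measure_ball_lt_top⟩

lemma K2 (hn : 1 ≤ n) (hlam0 : 0 < lam) (hlam : lam < n) (x : Euc n) {r : ℝ} (hr : 0 < r) :
    wInt n (fun x : Euc n => ‖x‖ ^ (lam - n)) (ball x r) ≤ Cw n lam * ENNReal.ofReal (r ^ lam) := by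
  rcases le_or_gt ‖x‖ (2*r) with hx | hx
  · have hsub : ball x r ⊆ ball (0 : Euc n) (3*r) := by
      intro y hy
      rw [mem_ball_zero_iff]
      have h1 : ‖y‖ - ‖x‖ ≤ ‖y - x‖ := norm_sub_norm_le y x
      have h2 : ‖y - x‖ < r := by rw [← dist_eq_norm]; exact hy
      linarith
    calc wInt n (fun x : Euc n => ‖x‖ ^ (lam - n)) (ball x r)
        ≤ wInt n (fun x : Euc n => ‖x‖ ^ (lam - n)) (ball (0 : Euc n) (3*r)) :=
          lintegral_mono_set hsub
      _ ≤ c0 n lam * ENNReal.ofReal ((3*r) ^ lam) := core hn hlam0 hlam (by positivity)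
      _ = c0 n lam * ENNReal.ofReal ((3:ℝ) ^ lam) * ENNReal.ofReal (r ^ lam) := by
          rw [Real.mul_rpow (by norm_num) hr.le,
            ENNReal.ofReal_mul (by positivity), mul_assoc]
      _ ≤ Cw n lam * ENNReal.ofReal (r ^ lam) :=
          mul_le_mul_left le_self_add _
  · have hb : wInt n (fun x : Euc n => ‖x‖ ^ (lam - n)) (ball x r) ≤
        ∫⁻ _ in ball x r, ENNReal.ofReal (r ^ (lam - (n:ℝ))) := by
      refine lintegral_mono_ae ?_
      filter_upwards [ae_restrict_mem measurableSet_ball] with y hy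
      refine ENNReal.ofReal_le_ofReal ?_
      have h1 : ‖x‖ - ‖y‖ ≤ ‖x - y‖ := norm_sub_norm_le x y
      have h2 : ‖x - y‖ < r := by rw [← dist_eq_norm, dist_comm]; exact hy
      exact Real.rpow_le_rpow_of_nonpos hr (by linarith) (by linarith)
    calc wInt n (fun x : Euc n => ‖x‖ ^ (lam - n)) (ball x r)
        ≤ ∫⁻ _ in ball x r, ENNReal.ofReal (r ^ (lam - (n:ℝ))) := hb
      _ = ENNReal.ofReal (r ^ (lam - (n:ℝ))) * volume (ball x r) := setLIntegral_const _ _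
      _ = ENNReal.ofReal (r ^ (lam - (n:ℝ))) *
            (ENNReal.ofReal (r ^ (n:ℕ)) * volume (ball (0 : Euc n) 1)) := by
          rw [vol_ball hn x hr.le]
      _ = ENNReal.ofReal (r ^ lam) * volume (ball (0 : Euc n) 1) := by
          rw [← mul_assoc, ← ENNReal.ofReal_mul (Real.rpow_nonneg hr.le _), rpow_sub_nat hr]
      _ ≤ Cw n lam * ENNReal.ofReal (r ^ lam) := by
          rw [mul_comm]; exact mul_le_mul_left le_add_self _

lemma K2' (hn : 1 ≤ n) (hlam0 : 0 < lam) (hlam : lam < n) (x : Euc n) {r : ℝ} (hr : 0 < r) :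
    wInt n (fun x : Euc n => ‖x‖ ^ (lam - n)) (closedBall x r) ≤
      Cw n lam * ENNReal.ofReal ((2*r) ^ lam) :=
  le_trans (lintegral_mono_set (closedBall_subset_ball (by linarith)))
    (K2 hn hlam0 hlam x (by linarith))

def C1 (n : ℕ) (lam : ℝ) : ℝ≥0∞ :=
  c0 n lam * ENNReal.ofReal ((18:ℝ) ^ lam * (12:ℝ) ^ ((n:ℝ) - lam)) +
    ENNReal.ofReal ((2:ℝ) ^ ((n:ℝ) - lam) * (6:ℝ) ^ (n:ℕ)) * volume (ball (0 : Euc n) 1)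

lemma C1_lt_top (hlam0 : 0 < lam) : C1 n lam < ⊤ :=
  ENNReal.add_lt_top.2 ⟨ENNReal.mul_lt_top (c0_lt_top hlam0) ENNReal.ofReal_lt_top,
    ENNReal.mul_lt_top ENNReal.ofReal_lt_top measure_ball_lt_top⟩

lemma K3 (hn : 1 ≤ n) (hlam0 : 0 < lam) (hlam : lam < n) (z : Euc n) {ρ : ℝ} (hρ : 0 < ρ)
    {y : Euc n} (hy : y ∈ closedBall z ρ) (hy0 : y ≠ 0) :
    wInt n (fun x : Euc n => ‖x‖ ^ (lam - n)) (closedBall z (4*ρ)) ≤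
      C1 n lam * ENNReal.ofReal (ρ ^ (n:ℕ)) * ENNReal.ofReal (‖y‖ ^ (lam - (n:ℝ))) := by
  have hy0' : 0 < ‖y‖ := norm_pos_iff.2 hy0
  have hzy : ‖z - y‖ ≤ ρ := by rw [← dist_eq_norm, dist_comm]; exact hy
  have hsub : closedBall z (4*ρ) ⊆ ball y (6*ρ) := by
    intro v hv
    have h1 : ‖v - z‖ ≤ 4*ρ := by rw [← dist_eq_norm]; exact hv
    have h2 : ‖v - y‖ ≤ ‖v - z‖ + ‖z - y‖ := norm_sub_le_norm_sub_add_norm_sub v z y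
    rw [mem_ball, dist_eq_norm]
    linarith
  have hmono := lintegral_mono_set (μ := (volume : Measure (Euc n)))
    (f := fun v : Euc n => ENNReal.ofReal (‖v‖ ^ (lam - (n:ℝ)))) hsub
  rcases le_or_gt ‖y‖ (12*ρ) with hc | hc
  · have hsub2 : ball y (6*ρ) ⊆ ball (0 : Euc n) (18*ρ) := by
      intro v hv
      rw [mem_ball_zero_iff]
      have h1 : ‖v‖ - ‖y‖ ≤ ‖v - y‖ := norm_sub_norm_le v y
      have h2 : ‖v - y‖ < 6*ρ := by rw [← dist_eq_norm]; exact hv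
      linarith
    have hreal : (18:ℝ) ^ lam * ρ ^ lam ≤
        ((18:ℝ) ^ lam * (12:ℝ) ^ ((n:ℝ) - lam)) * (ρ ^ (n:ℕ) * ‖y‖ ^ (lam - (n:ℝ))) := by
      have h1 : ((12:ℝ)*ρ) ^ (lam - (n:ℝ)) ≤ ‖y‖ ^ (lam - (n:ℝ)) :=
        Real.rpow_le_rpow_of_nonpos hy0' hc (by linarith)
      have h2 : ρ ^ lam = (12:ℝ) ^ ((n:ℝ) - lam) * (ρ ^ (n:ℕ) * ((12*ρ) ^ (lam - (n:ℝ)))) := by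
        rw [Real.mul_rpow (by norm_num) hρ.le]
        rw [show (12:ℝ) ^ ((n:ℝ) - lam) * (ρ ^ (n:ℕ) * ((12:ℝ) ^ (lam - (n:ℝ)) * ρ ^ (lam - (n:ℝ)))) =
          ((12:ℝ) ^ ((n:ℝ) - lam) * (12:ℝ) ^ (lam - (n:ℝ))) * (ρ ^ (lam - (n:ℝ)) * ρ ^ (n:ℕ)) by ring]
        rw [← Real.rpow_add (by norm_num), rpow_sub_nat hρ]
        simp
      calc (18:ℝ) ^ lam * ρ ^ lam
          = ((18:ℝ) ^ lam * (12:ℝ) ^ ((n:ℝ) - lam) * ρ ^ (n:ℕ)) * ((12*ρ) ^ (lam - (n:ℝ))) := by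
            rw [h2]; ring
        _ ≤ ((18:ℝ) ^ lam * (12:ℝ) ^ ((n:ℝ) - lam) * ρ ^ (n:ℕ)) * ‖y‖ ^ (lam - (n:ℝ)) := by
            have h6 : (0:ℝ) ≤ (18:ℝ) ^ lam * (12:ℝ) ^ ((n:ℝ) - lam) * ρ ^ (n:ℕ) := by positivity
            exact mul_le_mul_of_nonneg_left h1 h6
        _ = _ := by ring
    calc wInt n (fun x : Euc n => ‖x‖ ^ (lam - n)) (closedBall z (4*ρ))
        ≤ wInt n (fun x : Euc n => ‖x‖ ^ (lam - n)) (ball (0 : Euc n) (18*ρ)) :=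
          le_trans hmono (lintegral_mono_set hsub2)
      _ ≤ c0 n lam * ENNReal.ofReal ((18*ρ) ^ lam) := core hn hlam0 hlam (by positivity)
      _ = c0 n lam * ENNReal.ofReal ((18:ℝ) ^ lam * ρ ^ lam) := by
          rw [Real.mul_rpow (by norm_num) hρ.le]
      _ ≤ c0 n lam * ENNReal.ofReal
            (((18:ℝ) ^ lam * (12:ℝ) ^ ((n:ℝ) - lam)) * (ρ ^ (n:ℕ) * ‖y‖ ^ (lam - (n:ℝ)))) := by
          exact mul_le_mul_right (ENNReal.ofReal_le_ofReal hreal) _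
      _ = (c0 n lam * ENNReal.ofReal ((18:ℝ) ^ lam * (12:ℝ) ^ ((n:ℝ) - lam))) *
            ENNReal.ofReal (ρ ^ (n:ℕ)) * ENNReal.ofReal (‖y‖ ^ (lam - (n:ℝ))) := by
          rw [show ((18:ℝ) ^ lam * (12:ℝ) ^ ((n:ℝ) - lam)) * (ρ ^ (n:ℕ) * ‖y‖ ^ (lam - (n:ℝ))) =
              (((18:ℝ) ^ lam * (12:ℝ) ^ ((n:ℝ) - lam)) * ρ ^ (n:ℕ)) * ‖y‖ ^ (lam - (n:ℝ)) from by
              ring,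
            ENNReal.ofReal_mul (by positivity), ENNReal.ofReal_mul (by positivity)]
          ring
      _ ≤ C1 n lam * ENNReal.ofReal (ρ ^ (n:ℕ)) * ENNReal.ofReal (‖y‖ ^ (lam - (n:ℝ))) := by
          exact mul_le_mul_left (mul_le_mul_left le_self_add _) _
  · have hpt : ∀ v ∈ ball y (6*ρ), ‖v‖ ^ (lam - (n:ℝ)) ≤
        (2:ℝ) ^ ((n:ℝ) - lam) * ‖y‖ ^ (lam - (n:ℝ)) := by
      intro v hv
      have h1 : ‖y‖ - ‖v‖ ≤ ‖y - v‖ := norm_sub_norm_le y v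
      have h2 : ‖y - v‖ < 6*ρ := by rw [← dist_eq_norm, dist_comm]; exact hv
      have h3 : ‖y‖ * 2⁻¹ ≤ ‖v‖ := by linarith
      have h4 : ‖v‖ ^ (lam - (n:ℝ)) ≤ (‖y‖ * 2⁻¹) ^ (lam - (n:ℝ)) :=
        Real.rpow_le_rpow_of_nonpos (by linarith) h3 (by linarith)
      calc ‖v‖ ^ (lam - (n:ℝ)) ≤ (‖y‖ * 2⁻¹) ^ (lam - (n:ℝ)) := h4
        _ = (2:ℝ) ^ ((n:ℝ) - lam) * ‖y‖ ^ (lam - (n:ℝ)) := by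
            rw [Real.mul_rpow hy0'.le (by norm_num), inv_two_rpow]; ring
    calc wInt n (fun x : Euc n => ‖x‖ ^ (lam - n)) (closedBall z (4*ρ))
        ≤ ∫⁻ _ in ball y (6*ρ),
            ENNReal.ofReal ((2:ℝ) ^ ((n:ℝ) - lam) * ‖y‖ ^ (lam - (n:ℝ))) := by
          refine le_trans hmono (lintegral_mono_ae ?_)
          filter_upwards [ae_restrict_mem measurableSet_ball] with v hv
          exact ENNReal.ofReal_le_ofReal (hpt v hv)
      _ = ENNReal.ofReal ((2:ℝ) ^ ((n:ℝ) - lam) * ‖y‖ ^ (lam - (n:ℝ))) *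
            (ENNReal.ofReal ((6*ρ) ^ (n:ℕ)) * volume (ball (0 : Euc n) 1)) := by
          rw [setLIntegral_const, vol_ball hn y (by positivity)]
      _ = (ENNReal.ofReal ((2:ℝ) ^ ((n:ℝ) - lam) * (6:ℝ) ^ (n:ℕ)) * volume (ball (0 : Euc n) 1)) *
            ENNReal.ofReal (ρ ^ (n:ℕ)) * ENNReal.ofReal (‖y‖ ^ (lam - (n:ℝ))) := by
          rw [mul_pow, ENNReal.ofReal_mul (by positivity), ENNReal.ofReal_mul (by positivity),
            ENNReal.ofReal_mul (by positivity)]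
          ring
      _ ≤ C1 n lam * ENNReal.ofReal (ρ ^ (n:ℕ)) * ENNReal.ofReal (‖y‖ ^ (lam - (n:ℝ))) := by
          exact mul_le_mul_left (mul_le_mul_left le_add_self _) _

def C2 (n : ℕ) (lam : ℝ) : ℝ≥0∞ :=
  ENNReal.ofReal ((8:ℝ) ^ ((n:ℝ) - lam)) * (Cw n lam + volume (ball (0 : Euc n) 1))

lemma C2_lt_top (hlam0 : 0 < lam) : C2 n lam < ⊤ :=
  ENNReal.mul_lt_top ENNReal.ofReal_lt_top
    (ENNReal.add_lt_top.2 ⟨Cw_lt_top hlam0, measure_ball_lt_top⟩)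

lemma K4 (hn : 1 ≤ n) (hlam0 : 0 < lam) (hlam : lam < n) (x : Euc n) {r : ℝ} (hr : 0 < r) :
    ENNReal.ofReal ((2*‖x‖/r + 4) ^ ((n:ℝ) - lam)) *
        wInt n (fun x : Euc n => ‖x‖ ^ (lam - n)) (ball x r) ≤
      C2 n lam * ENNReal.ofReal (r ^ lam) := by
  have hnl : (0:ℝ) ≤ (n:ℝ) - lam := by linarith
  rcases le_or_gt ‖x‖ (2*r) with hx | hx
  · have hfac : ((2*‖x‖/r + 4) : ℝ) ^ ((n:ℝ) - lam) ≤ (8:ℝ) ^ ((n:ℝ) - lam) := by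
      refine Real.rpow_le_rpow (by positivity) ?_ hnl
      have : 2*‖x‖/r ≤ 4 := by rw [div_le_iff₀ hr]; linarith
      linarith
    calc ENNReal.ofReal ((2*‖x‖/r + 4) ^ ((n:ℝ) - lam)) *
          wInt n (fun x : Euc n => ‖x‖ ^ (lam - n)) (ball x r)
        ≤ ENNReal.ofReal ((8:ℝ) ^ ((n:ℝ) - lam)) * (Cw n lam * ENNReal.ofReal (r ^ lam)) :=
          mul_le_mul (ENNReal.ofReal_le_ofReal hfac) (K2 hn hlam0 hlam x hr) zero_le zero_le
      _ ≤ C2 n lam * ENNReal.ofReal (r ^ lam) := by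
          rw [C2, mul_add, add_mul]
          calc ENNReal.ofReal ((8:ℝ) ^ ((n:ℝ) - lam)) * (Cw n lam * ENNReal.ofReal (r ^ lam))
              = ENNReal.ofReal ((8:ℝ) ^ ((n:ℝ) - lam)) * Cw n lam * ENNReal.ofReal (r ^ lam) := by
                ring
            _ ≤ _ := le_add_of_le_of_nonneg le_rfl zero_le
  · have hx0 : 0 < ‖x‖ := by linarith
    have hb : wInt n (fun x : Euc n => ‖x‖ ^ (lam - n)) (ball x r) ≤
        ENNReal.ofReal ((‖x‖*2⁻¹) ^ (lam - (n:ℝ))) *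
          (ENNReal.ofReal (r ^ (n:ℕ)) * volume (ball (0 : Euc n) 1)) := by
      have hpt : ∀ᵐ v ∂(volume.restrict (ball x r)),
          ENNReal.ofReal (‖v‖ ^ (lam - (n:ℝ))) ≤
            ENNReal.ofReal ((‖x‖*2⁻¹) ^ (lam - (n:ℝ))) := by
        filter_upwards [ae_restrict_mem measurableSet_ball] with v hv
        refine ENNReal.ofReal_le_ofReal (Real.rpow_le_rpow_of_nonpos (by positivity) ?_ (by linarith))
        have h1 : ‖x‖ - ‖v‖ ≤ ‖x - v‖ := norm_sub_norm_le x v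
        have h2 : ‖x - v‖ < r := by rw [← dist_eq_norm, dist_comm]; exact hv
        linarith
      calc wInt n (fun x : Euc n => ‖x‖ ^ (lam - n)) (ball x r)
          ≤ ∫⁻ _ in ball x r, ENNReal.ofReal ((‖x‖*2⁻¹) ^ (lam - (n:ℝ))) :=
            lintegral_mono_ae hpt
        _ = _ := by rw [setLIntegral_const, vol_ball hn x hr.le]
    have hfac : ((2*‖x‖/r + 4) : ℝ) ^ ((n:ℝ) - lam) ≤ ((4*‖x‖/r) : ℝ) ^ ((n:ℝ) - lam) := by
      refine Real.rpow_le_rpow (by positivity) ?_ hnl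
      have : (4:ℝ) ≤ 2*‖x‖/r := by rw [le_div_iff₀ hr]; linarith
      have h2 : 2*‖x‖/r + 2*‖x‖/r = 4*‖x‖/r := by ring
      linarith
    have hkey : ((4*‖x‖/r) : ℝ) ^ ((n:ℝ) - lam) * ((‖x‖*2⁻¹) ^ (lam - (n:ℝ)) * r ^ (n:ℕ)) =
        (8:ℝ) ^ ((n:ℝ) - lam) * r ^ lam := by
      have hsplit : ((4*‖x‖/r) : ℝ) = (‖x‖*2⁻¹) * (8/r) := by field_simp; ring
      rw [hsplit, Real.mul_rpow (by positivity) (by positivity)]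
      have h1 : (‖x‖*2⁻¹) ^ ((n:ℝ) - lam) * (‖x‖*2⁻¹) ^ (lam - (n:ℝ)) = 1 := by
        rw [← Real.rpow_add (by positivity)]
        simp
      have h2 : ((8/r) : ℝ) ^ ((n:ℝ) - lam) * r ^ (n:ℕ) = (8:ℝ) ^ ((n:ℝ) - lam) * r ^ lam := by
        rw [Real.div_rpow (by norm_num) hr.le, div_mul_eq_mul_div, mul_div_assoc,
          ← Real.rpow_natCast r n, ← Real.rpow_sub hr]
        norm_num
      calc (‖x‖*2⁻¹) ^ ((n:ℝ) - lam) * ((8/r) : ℝ) ^ ((n:ℝ) - lam) *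
            ((‖x‖*2⁻¹) ^ (lam - (n:ℝ)) * r ^ (n:ℕ))
          = ((‖x‖*2⁻¹) ^ ((n:ℝ) - lam) * (‖x‖*2⁻¹) ^ (lam - (n:ℝ))) *
              (((8/r) : ℝ) ^ ((n:ℝ) - lam) * r ^ (n:ℕ)) := by ring
        _ = _ := by rw [h1, h2, one_mul]
    calc ENNReal.ofReal ((2*‖x‖/r + 4) ^ ((n:ℝ) - lam)) *
          wInt n (fun x : Euc n => ‖x‖ ^ (lam - n)) (ball x r)
        ≤ ENNReal.ofReal (((4*‖x‖/r) : ℝ) ^ ((n:ℝ) - lam)) *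
            (ENNReal.ofReal ((‖x‖*2⁻¹) ^ (lam - (n:ℝ))) *
              (ENNReal.ofReal (r ^ (n:ℕ)) * volume (ball (0 : Euc n) 1))) :=
          mul_le_mul (ENNReal.ofReal_le_ofReal hfac) hb zero_le zero_le
      _ = ENNReal.ofReal (((4*‖x‖/r) : ℝ) ^ ((n:ℝ) - lam) *
            ((‖x‖*2⁻¹) ^ (lam - (n:ℝ)) * r ^ (n:ℕ))) * volume (ball (0 : Euc n) 1) := by
          rw [ENNReal.ofReal_mul (by positivity), ENNReal.ofReal_mul (Real.rpow_nonneg (by positivity) _)]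
          ring
      _ = ENNReal.ofReal ((8:ℝ) ^ ((n:ℝ) - lam)) * volume (ball (0 : Euc n) 1) *
            ENNReal.ofReal (r ^ lam) := by
          rw [hkey, ENNReal.ofReal_mul (by positivity)]
          ring
      _ ≤ C2 n lam * ENNReal.ofReal (r ^ lam) := by
          refine mul_le_mul_left ?_ _
          rw [C2, mul_add]
          exact le_add_self

lemma ae_restrict_ne_zero (hn : 1 ≤ n) (s : Set (Euc n)) :
    ∀ᵐ v ∂((volume : Measure (Euc n)).restrict s), v ≠ 0 := by
  haveI := nontriv hn
  refine ae_iff.2 (le_antisymm ?_ zero_le)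
  calc (volume : Measure (Euc n)).restrict s {v | ¬ v ≠ 0}
      ≤ volume {v : Euc n | ¬ v ≠ 0} := Measure.le_iff'.1 Measure.restrict_le_self _
    _ = 0 := by
        rw [show {v : Euc n | ¬ v ≠ 0} = {0} from by ext v; simp]
        exact measure_singleton 0

lemma two_ofReal_half {t : ℝ} : ENNReal.ofReal t = 2 * ENNReal.ofReal (t/2) := by
  rw [show (2:ℝ≥0∞) = ENNReal.ofReal (2:ℝ) by simp, ← ENNReal.ofReal_mul (by norm_num)]
  congr 1; ring

end S19
end

/-- the Hardy–Littlewood maximal operator is bounded from `L^{1,λ}(|x|^{λ-n})`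
to the weak Morrey space `WL^{1,λ}(|x|^{λ-n})` for `0 < λ < n`. -/
theorem statement19 (n : ℕ) (hn : 1 ≤ n) (lam : ℝ)
    (hlam0 : 0 < lam) (hlam : lam < (n : ℝ)) :
    ∃ C : ℝ≥0∞, C < ⊤ ∧ ∀ f : Euc n → ℝ, Measurable f →
      morreyNorm n 1 lam (fun x => ‖x‖ ^ (lam - n)) f < ⊤ →
      weakMorreyNormE n 1 lam (fun x => ‖x‖ ^ (lam - n)) (maximal n f) ≤
        C * morreyNorm n 1 lam (fun x => ‖x‖ ^ (lam - n)) f := by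
  classical
  set u : Euc n → ℝ := fun x => ‖x‖ ^ (lam - n) with hu
  set V1 : ℝ≥0∞ := volume (ball (0:Euc n) 1) with hV1
  have hV1pos : 0 < V1 := S19.V1_pos hn
  have hV1top : V1 < ⊤ := S19.V1_lt_top
  set CA : ℝ≥0∞ := 2 * (S19.C1 n lam * V1⁻¹ * ENNReal.ofReal ((2:ℝ) ^ lam)) with hCA
  set CB : ℝ≥0∞ := 2 * (2 * V1⁻¹ * S19.C2 n lam) with hCB
  have hCAtop : CA < ⊤ := by
    refine ENNReal.mul_lt_top (by norm_num) (ENNReal.mul_lt_top (ENNReal.mul_lt_top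
      (S19.C1_lt_top hlam0) ?_) ENNReal.ofReal_lt_top)
    exact ENNReal.inv_lt_top.2 hV1pos
  have hCBtop : CB < ⊤ := by
    refine ENNReal.mul_lt_top (by norm_num) (ENNReal.mul_lt_top (ENNReal.mul_lt_top
      (by norm_num) ?_) (S19.C2_lt_top hlam0))
    exact ENNReal.inv_lt_top.2 hV1pos
  refine ⟨CA + CB, ENNReal.add_lt_top.2 ⟨hCAtop, hCBtop⟩, ?_⟩
  intro f hf hfin
  set N : ℝ≥0∞ := morreyNorm n 1 lam u f with hN
  -- Morrey bound over balls
  have hK1 : ∀ (z : Euc n) (ρ : ℝ), 0 < ρ →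
      (∫⁻ v in ball z ρ, ENNReal.ofReal (|f v| ^ (1:ℝ) * u v)) ≤ N * ENNReal.ofReal (ρ ^ lam) := by
    intro z ρ hρ
    have hle : (ENNReal.ofReal (ρ ^ (-lam)) *
        ∫⁻ v in ball z ρ, ENNReal.ofReal (|f v| ^ (1:ℝ) * u v)) ^ ((1:ℝ)/1) ≤ N := by
      rw [hN, morreyNorm]
      exact le_iSup_of_le z (le_iSup_of_le ρ (le_iSup_of_le hρ le_rfl))
    rw [show (1:ℝ)/1 = 1 by norm_num, ENNReal.rpow_one] at hle
    have hcancel : ENNReal.ofReal (ρ ^ lam) * ENNReal.ofReal (ρ ^ (-lam)) = 1 := by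
      rw [← ENNReal.ofReal_mul (Real.rpow_nonneg hρ.le _), ← Real.rpow_add hρ]
      simp
    calc (∫⁻ v in ball z ρ, ENNReal.ofReal (|f v| ^ (1:ℝ) * u v))
        = ENNReal.ofReal (ρ ^ lam) * (ENNReal.ofReal (ρ ^ (-lam)) *
            ∫⁻ v in ball z ρ, ENNReal.ofReal (|f v| ^ (1:ℝ) * u v)) := by
          rw [← mul_assoc, hcancel, one_mul]
      _ ≤ ENNReal.ofReal (ρ ^ lam) * N := mul_le_mul_right hle _
      _ = N * ENNReal.ofReal (ρ ^ lam) := mul_comm _ _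
  rw [weakMorreyNormE]
  refine iSup_le fun x₀ => iSup_le fun r => iSup_le fun hr => iSup_le fun t => iSup_le fun ht => ?_
  rw [show (1:ℝ)/1 = 1 by norm_num, ENNReal.rpow_one, Real.rpow_one]
  -- split f
  set f₁ : Euc n → ℝ := (ball x₀ (2*r)).indicator f with hf₁
  set f₂ : Euc n → ℝ := (ball x₀ (2*r))ᶜ.indicator f with hf₂
  have habs : ∀ v, |f v| = |f₁ v| + |f₂ v| := by
    intro v
    by_cases hv : v ∈ ball x₀ (2*r) <;>
      simp [hf₁, hf₂, Set.indicator_of_mem, Set.indicator_of_notMem, hv]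
  have hm1 : Measurable f₁ := hf.indicator measurableSet_ball
  have hm2 : Measurable f₂ := hf.indicator measurableSet_ball.compl
  have hsubadd : ∀ y, maximal n f y ≤ maximal n f₁ y + maximal n f₂ y := by
    intro y
    rw [maximal]
    refine iSup_le fun z => iSup_le fun ρ => iSup_le fun hρ => iSup_le fun hy => ?_
    have hsplit : (∫⁻ v in ball z ρ, ENNReal.ofReal |f v|) =
        (∫⁻ v in ball z ρ, ENNReal.ofReal |f₁ v|) + ∫⁻ v in ball z ρ, ENNReal.ofReal |f₂ v| := by
      have hpt : ∀ v, ENNReal.ofReal |f v| = ENNReal.ofReal |f₁ v| + ENNReal.ofReal |f₂ v| :=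
        fun v => by rw [habs v, ENNReal.ofReal_add (abs_nonneg _) (abs_nonneg _)]
      simp_rw [hpt]
      exact lintegral_add_left (hm1.abs.ennreal_ofReal) _
    rw [hsplit, mul_add]
    exact add_le_add
      (le_iSup_of_le z (le_iSup_of_le ρ (le_iSup_of_le hρ (le_iSup_of_le hy le_rfl))))
      (le_iSup_of_le z (le_iSup_of_le ρ (le_iSup_of_le hρ (le_iSup_of_le hy le_rfl))))
  set E : Set (Euc n) := {y ∈ ball x₀ r | ENNReal.ofReal t < maximal n f y} with hE
  set E₁ : Set (Euc n) := {y ∈ ball x₀ r | ENNReal.ofReal (t/2) < maximal n f₁ y} with hE₁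
  set E₂ : Set (Euc n) := {y ∈ ball x₀ r | ENNReal.ofReal (t/2) < maximal n f₂ y} with hE₂
  have hEsub : E ⊆ E₁ ∪ E₂ := by
    rintro y ⟨hyb, hyt⟩
    by_contra hcon
    simp only [Set.mem_union, hE₁, hE₂, Set.mem_setOf_eq, not_or, not_and, not_lt] at hcon
    have h1 := hcon.1 hyb
    have h2 := hcon.2 hyb
    have h3 : maximal n f y ≤ ENNReal.ofReal t := by
      calc maximal n f y ≤ maximal n f₁ y + maximal n f₂ y := hsubadd y
        _ ≤ ENNReal.ofReal (t/2) + ENNReal.ofReal (t/2) := add_le_add h1 h2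
        _ = ENNReal.ofReal t := by rw [← ENNReal.ofReal_add (by linarith) (by linarith)]; norm_num
    exact absurd hyt (not_lt.2 h3)
  have hwE : wInt n u E ≤ wInt n u E₁ + wInt n u E₂ :=
    le_trans (lintegral_mono_set hEsub) (lintegral_union_le _ _ _)
  have hE1bound : ENNReal.ofReal t * wInt n u E₁ ≤ CA * (N * ENNReal.ofReal (r ^ lam)) := by
    have hnl : (0:ℝ) ≤ (n:ℝ) - lam := by linarith
    have ht2 : (0:ℝ) < t/2 := by linarith
    -- indicator identities
    have hgind : (fun v => ENNReal.ofReal (|f₁ v| ^ (1:ℝ) * u v)) =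
        (ball x₀ (2*r)).indicator (fun v => ENNReal.ofReal (|f v| ^ (1:ℝ) * u v)) := by
      funext v
      by_cases hv : v ∈ ball x₀ (2*r) <;>
        simp [hf₁, Set.indicator_of_mem, Set.indicator_of_notMem, hv]
    have hItot : (∫⁻ v, ENNReal.ofReal (|f₁ v| ^ (1:ℝ) * u v)) ≤
        N * ENNReal.ofReal ((2*r) ^ lam) := by
      rw [hgind, lintegral_indicator measurableSet_ball]
      exact hK1 x₀ (2*r) (by linarith)
    have habs1ind : (fun v => ENNReal.ofReal |f₁ v|) =
        (ball x₀ (2*r)).indicator (fun v => ENNReal.ofReal |f v|) := by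
      funext v
      by_cases hv : v ∈ ball x₀ (2*r) <;>
        simp [hf₁, Set.indicator_of_mem, Set.indicator_of_notMem, hv]
    -- total integral of |f₁| is finite
    set I : ℝ≥0∞ := ∫⁻ v, ENNReal.ofReal |f₁ v| with hI
    have hItop : I < ⊤ := by
      have hΛpos : (0:ℝ) < ‖x₀‖ + 2*r := by have := norm_nonneg x₀; linarith
      have hb : I ≤ ENNReal.ofReal ((‖x₀‖ + 2*r) ^ ((n:ℝ)-lam)) *
          (N * ENNReal.ofReal ((2*r) ^ lam)) := by
        rw [hI, habs1ind, lintegral_indicator measurableSet_ball]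
        have hae : ∀ᵐ v ∂(volume.restrict (ball x₀ (2*r))), ENNReal.ofReal |f v| ≤
            ENNReal.ofReal ((‖x₀‖ + 2*r) ^ ((n:ℝ)-lam)) *
              ENNReal.ofReal (|f v| ^ (1:ℝ) * u v) := by
          filter_upwards [ae_restrict_mem measurableSet_ball,
            S19.ae_restrict_ne_zero hn (ball x₀ (2*r))] with v hv hv0
          have hvn : 0 < ‖v‖ := norm_pos_iff.2 hv0
          have hvΛ : ‖v‖ ≤ ‖x₀‖ + 2*r := by
            have h5 := norm_sub_norm_le v x₀
            have h6 : ‖v - x₀‖ < 2*r := by rw [← dist_eq_norm]; exact hv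
            linarith
          have hkey : |f v| ≤ (‖x₀‖ + 2*r) ^ ((n:ℝ)-lam) * (|f v| ^ (1:ℝ) * u v) := by
            simp only [Real.rpow_one, hu]
            have h7 : (1:ℝ) = ‖v‖ ^ ((n:ℝ)-lam) * ‖v‖ ^ (lam-(n:ℝ)) := by
              rw [← Real.rpow_add hvn]; norm_num
            have h8 : ‖v‖ ^ ((n:ℝ)-lam) ≤ (‖x₀‖ + 2*r) ^ ((n:ℝ)-lam) :=
              Real.rpow_le_rpow (norm_nonneg _) hvΛ hnl
            have h9 : (0:ℝ) ≤ |f v| * ‖v‖ ^ (lam-(n:ℝ)) := by positivity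
            calc |f v| = (|f v| * ‖v‖ ^ (lam-(n:ℝ))) * ‖v‖ ^ ((n:ℝ)-lam) := by
                  rw [mul_assoc, mul_comm (‖v‖ ^ (lam-(n:ℝ))), ← h7, mul_one]
              _ ≤ (|f v| * ‖v‖ ^ (lam-(n:ℝ))) * (‖x₀‖ + 2*r) ^ ((n:ℝ)-lam) :=
                  mul_le_mul_of_nonneg_left h8 h9
              _ = (‖x₀‖ + 2*r) ^ ((n:ℝ)-lam) * (|f v| * ‖v‖ ^ (lam-(n:ℝ))) := by ring
          calc ENNReal.ofReal |f v|
              ≤ ENNReal.ofReal ((‖x₀‖ + 2*r) ^ ((n:ℝ)-lam) * (|f v| ^ (1:ℝ) * u v)) :=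
                ENNReal.ofReal_le_ofReal hkey
            _ = _ := ENNReal.ofReal_mul (Real.rpow_nonneg hΛpos.le _)
        calc (∫⁻ v in ball x₀ (2*r), ENNReal.ofReal |f v|)
            ≤ ∫⁻ v in ball x₀ (2*r), ENNReal.ofReal ((‖x₀‖ + 2*r) ^ ((n:ℝ)-lam)) *
                ENNReal.ofReal (|f v| ^ (1:ℝ) * u v) := lintegral_mono_ae hae
          _ = ENNReal.ofReal ((‖x₀‖ + 2*r) ^ ((n:ℝ)-lam)) *
                ∫⁻ v in ball x₀ (2*r), ENNReal.ofReal (|f v| ^ (1:ℝ) * u v) :=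
              lintegral_const_mul' _ _ ENNReal.ofReal_ne_top
          _ ≤ _ := mul_le_mul_right (hK1 x₀ (2*r) (by linarith)) _
      exact lt_of_le_of_lt hb (ENNReal.mul_lt_top ENNReal.ofReal_lt_top
        (ENNReal.mul_lt_top hfin ENNReal.ofReal_lt_top))
    set D : ℝ≥0∞ := I / (ENNReal.ofReal (t/2) * V1) with hD
    have hDtop : D ≠ ⊤ := by
      rw [hD]
      exact (ENNReal.div_lt_top hItop.ne
        (mul_ne_zero (ENNReal.ofReal_pos.2 ht2).ne' hV1pos.ne')).ne
    set R₀ : ℝ := D.toReal ^ ((n:ℝ)⁻¹) with hR₀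
    -- selection of balls
    have Hsel : ∀ y ∈ E₁, ∃ z ρ, 0 < ρ ∧ y ∈ ball z ρ ∧
        (ENNReal.ofReal (t/2) * volume (ball z ρ) ≤
          ∫⁻ v in ball z ρ, ENNReal.ofReal |f₁ v|) ∧ ρ ≤ R₀ := by
      rintro y ⟨hyb, hyt⟩
      simp only [maximal, lt_iSup_iff] at hyt
      obtain ⟨z, ρ, hρ, hym, hgt⟩ := hyt
      have hvol0 : volume (ball z ρ) ≠ 0 := (measure_ball_pos volume z hρ).ne'
      have hvoltop : volume (ball z ρ) ≠ ⊤ := measure_ball_lt_top.ne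
      have hlow : ENNReal.ofReal (t/2) * volume (ball z ρ) ≤
          ∫⁻ v in ball z ρ, ENNReal.ofReal |f₁ v| := by
        have h1 := mul_le_mul_right hgt.le (volume (ball z ρ))
        rw [← mul_assoc, ENNReal.mul_inv_cancel hvol0 hvoltop, one_mul] at h1
        rw [mul_comm]
        exact h1
      refine ⟨z, ρ, hρ, hym, hlow, ?_⟩
      have h1 : ENNReal.ofReal (t/2) * (ENNReal.ofReal (ρ^(n:ℕ)) * V1) ≤ I := by
        rw [hV1, ← S19.vol_ball hn z hρ.le]
        exact le_trans hlow (setLIntegral_le_lintegral _ _)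
      have h2 : ENNReal.ofReal (ρ^(n:ℕ)) ≤ D := by
        rw [hD, ENNReal.le_div_iff_mul_le
          (Or.inl (mul_ne_zero (ENNReal.ofReal_pos.2 ht2).ne' hV1pos.ne'))
          (Or.inl (ENNReal.mul_lt_top ENNReal.ofReal_lt_top hV1top).ne)]
        calc ENNReal.ofReal (ρ^(n:ℕ)) * (ENNReal.ofReal (t/2) * V1)
            = ENNReal.ofReal (t/2) * (ENNReal.ofReal (ρ^(n:ℕ)) * V1) := by ring
          _ ≤ I := h1
      have h3 : ρ^(n:ℕ) ≤ D.toReal := by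
        have h4 := ENNReal.toReal_mono hDtop h2
        rwa [ENNReal.toReal_ofReal (by positivity)] at h4
      have h5 : ρ = (ρ^(n:ℕ)) ^ ((n:ℝ)⁻¹) := by
        rw [← Real.rpow_natCast ρ n, ← Real.rpow_mul hρ.le,
          mul_inv_cancel₀ (show (n:ℝ) ≠ 0 by exact_mod_cast Nat.one_le_iff_ne_zero.1 hn), Real.rpow_one]
      rw [h5, hR₀]
      exact Real.rpow_le_rpow (by positivity) h3 (by positivity)
    choose! Z P hP hmem hlow hle using Hsel
    obtain ⟨U, hUsub, hUdisj, hUcov⟩ :=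
      Vitali.exists_disjoint_subfamily_covering_enlargement_closedBall E₁ Z P R₀
        (fun a ha => hle a ha) 4 (by norm_num)
    have hUdisj' : Pairwise (Function.onFun Disjoint fun b : ↥U => closedBall (Z ↑b) (P ↑b)) :=
      fun b b' hbb' => hUdisj b.2 b'.2 (fun h => hbb' (Subtype.ext h))
    haveI : Countable ↥U := by
      have hcnt := MeasureTheory.Measure.countable_meas_pos_of_disjoint_iUnion
        (μ := (volume : Measure (Euc n)))
        (As := fun b : ↥U => closedBall (Z ↑b) (P ↑b))
        (fun _ => measurableSet_closedBall) hUdisj'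
      have hall : {b : ↥U | 0 < volume (closedBall (Z ↑b) (P ↑b))} = Set.univ := by
        refine Set.eq_univ_of_forall fun b => ?_
        exact lt_of_lt_of_le (measure_ball_pos _ _ (hP _ (hUsub b.2)))
          (measure_mono ball_subset_closedBall)
      rw [hall] at hcnt
      exact Set.countable_univ_iff.1 hcnt
    have hBdisj : Pairwise (Function.onFun Disjoint fun b : ↥U => ball (Z ↑b) (P ↑b)) :=
      fun b b' h => (hUdisj' h).mono ball_subset_closedBall ball_subset_closedBall
    have hcov : E₁ ⊆ ⋃ b : ↥U, closedBall (Z ↑b) (4 * P ↑b) := by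
      intro y hy
      obtain ⟨b, hbU, hbsub⟩ := hUcov y hy
      exact Set.mem_iUnion.2 ⟨⟨b, hbU⟩, hbsub (ball_subset_closedBall (hmem y hy))⟩
    -- per-ball estimate
    have hball : ∀ b : ↥U, ENNReal.ofReal (t/2) * wInt n u (closedBall (Z ↑b) (4 * P ↑b)) ≤
        S19.C1 n lam * V1⁻¹ *
          ∫⁻ v in ball (Z ↑b) (P ↑b), ENNReal.ofReal (|f₁ v| ^ (1:ℝ) * u v) := by
      intro b
      have hb := hUsub b.2
      have hρ : 0 < P ↑b := hP _ hb
      have hK2' := S19.K2' hn hlam0 hlam (Z ↑b) (r := 4 * P ↑b) (by linarith)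
      rw [← hu] at hK2'
      have hWtop : wInt n u (closedBall (Z ↑b) (4 * P ↑b)) ≠ ⊤ :=
        (lt_of_le_of_lt hK2' (ENNReal.mul_lt_top (S19.Cw_lt_top hlam0)
          ENNReal.ofReal_lt_top)).ne
      have hstep2 : wInt n u (closedBall (Z ↑b) (4 * P ↑b)) *
          (∫⁻ v in ball (Z ↑b) (P ↑b), ENNReal.ofReal |f₁ v|) ≤
          (S19.C1 n lam * ENNReal.ofReal ((P ↑b)^(n:ℕ))) *
            ∫⁻ v in ball (Z ↑b) (P ↑b), ENNReal.ofReal (|f₁ v| ^ (1:ℝ) * u v) := by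
        rw [← lintegral_const_mul' _ _ hWtop,
          ← lintegral_const_mul' _ _ (ENNReal.mul_lt_top (S19.C1_lt_top hlam0)
            ENNReal.ofReal_lt_top).ne]
        refine lintegral_mono_ae ?_
        filter_upwards [ae_restrict_mem measurableSet_ball,
          S19.ae_restrict_ne_zero hn (ball (Z ↑b) (P ↑b))] with v hv hv0
        have hK3 := S19.K3 hn hlam0 hlam (Z ↑b) hρ (ball_subset_closedBall hv) hv0
        rw [← hu] at hK3
        calc wInt n u (closedBall (Z ↑b) (4 * P ↑b)) * ENNReal.ofReal |f₁ v|
            ≤ (S19.C1 n lam * ENNReal.ofReal ((P ↑b)^(n:ℕ)) *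
                ENNReal.ofReal (u v)) * ENNReal.ofReal |f₁ v| := mul_le_mul_left hK3 _
          _ = (S19.C1 n lam * ENNReal.ofReal ((P ↑b)^(n:ℕ))) *
                ENNReal.ofReal (|f₁ v| ^ (1:ℝ) * u v) := by
              rw [show |f₁ v| ^ (1:ℝ) = |f₁ v| from Real.rpow_one _,
                ENNReal.ofReal_mul (abs_nonneg _)]
              ring
      have hlow' := hlow _ hb
      have hcomb : ENNReal.ofReal ((P ↑b)^(n:ℕ)) *
          ((ENNReal.ofReal (t/2) * wInt n u (closedBall (Z ↑b) (4 * P ↑b))) * V1) ≤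
          ENNReal.ofReal ((P ↑b)^(n:ℕ)) * (S19.C1 n lam *
            ∫⁻ v in ball (Z ↑b) (P ↑b), ENNReal.ofReal (|f₁ v| ^ (1:ℝ) * u v)) := by
        have hvol : volume (ball (Z ↑b) (P ↑b)) = ENNReal.ofReal ((P ↑b)^(n:ℕ)) * V1 := by
          rw [S19.vol_ball hn _ hρ.le, hV1]
        calc ENNReal.ofReal ((P ↑b)^(n:ℕ)) *
              ((ENNReal.ofReal (t/2) * wInt n u (closedBall (Z ↑b) (4 * P ↑b))) * V1)
            = wInt n u (closedBall (Z ↑b) (4 * P ↑b)) *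
                (ENNReal.ofReal (t/2) * volume (ball (Z ↑b) (P ↑b))) := by
              rw [hvol]; ring
          _ ≤ wInt n u (closedBall (Z ↑b) (4 * P ↑b)) *
                (∫⁻ v in ball (Z ↑b) (P ↑b), ENNReal.ofReal |f₁ v|) :=
              mul_le_mul_right hlow' _
          _ ≤ (S19.C1 n lam * ENNReal.ofReal ((P ↑b)^(n:ℕ))) *
                ∫⁻ v in ball (Z ↑b) (P ↑b), ENNReal.ofReal (|f₁ v| ^ (1:ℝ) * u v) := hstep2
          _ = _ := by ring
      have hcancel1 : (ENNReal.ofReal (t/2) * wInt n u (closedBall (Z ↑b) (4 * P ↑b))) * V1 ≤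
          S19.C1 n lam * ∫⁻ v in ball (Z ↑b) (P ↑b), ENNReal.ofReal (|f₁ v| ^ (1:ℝ) * u v) :=
        (ENNReal.mul_le_mul_iff_right (ENNReal.ofReal_pos.2 (by positivity)).ne'
          ENNReal.ofReal_ne_top).1 hcomb
      calc ENNReal.ofReal (t/2) * wInt n u (closedBall (Z ↑b) (4 * P ↑b))
          = ((ENNReal.ofReal (t/2) * wInt n u (closedBall (Z ↑b) (4 * P ↑b))) * V1) * V1⁻¹ := by
            rw [mul_assoc, ENNReal.mul_inv_cancel hV1pos.ne' hV1top.ne, mul_one]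
        _ ≤ (S19.C1 n lam *
              ∫⁻ v in ball (Z ↑b) (P ↑b), ENNReal.ofReal (|f₁ v| ^ (1:ℝ) * u v)) * V1⁻¹ :=
            mul_le_mul_left hcancel1 _
        _ = S19.C1 n lam * V1⁻¹ *
              ∫⁻ v in ball (Z ↑b) (P ↑b), ENNReal.ofReal (|f₁ v| ^ (1:ℝ) * u v) := by ring
    have hsum : (∑' b : ↥U, ∫⁻ v in ball (Z ↑b) (P ↑b),
        ENNReal.ofReal (|f₁ v| ^ (1:ℝ) * u v)) ≤ N * ENNReal.ofReal ((2*r) ^ lam) := by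
      rw [← lintegral_iUnion (fun _ => measurableSet_ball) hBdisj]
      exact le_trans (setLIntegral_le_lintegral _ _) hItot
    calc ENNReal.ofReal t * wInt n u E₁
        = 2 * (ENNReal.ofReal (t/2) * wInt n u E₁) := by rw [S19.two_ofReal_half]; ring
      _ ≤ 2 * (ENNReal.ofReal (t/2) *
            ∑' b : ↥U, wInt n u (closedBall (Z ↑b) (4 * P ↑b))) := by
          refine mul_le_mul_right (mul_le_mul_right ?_ _) _
          exact le_trans (lintegral_mono_set hcov) (lintegral_iUnion_le _ _)
      _ = 2 * ∑' b : ↥U, ENNReal.ofReal (t/2) * wInt n u (closedBall (Z ↑b) (4 * P ↑b)) := by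
          rw [ENNReal.tsum_mul_left]
      _ ≤ 2 * ∑' b : ↥U, S19.C1 n lam * V1⁻¹ *
            ∫⁻ v in ball (Z ↑b) (P ↑b), ENNReal.ofReal (|f₁ v| ^ (1:ℝ) * u v) :=
          mul_le_mul_right (ENNReal.tsum_le_tsum hball) _
      _ = 2 * (S19.C1 n lam * V1⁻¹ * ∑' b : ↥U,
            ∫⁻ v in ball (Z ↑b) (P ↑b), ENNReal.ofReal (|f₁ v| ^ (1:ℝ) * u v)) := by
          rw [ENNReal.tsum_mul_left]
      _ ≤ 2 * (S19.C1 n lam * V1⁻¹ * (N * ENNReal.ofReal ((2*r) ^ lam))) :=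
          mul_le_mul_right (mul_le_mul_right hsum _) _
      _ = CA * (N * ENNReal.ofReal (r ^ lam)) := by
          rw [hCA, show ENNReal.ofReal ((2*r)^lam) =
            ENNReal.ofReal ((2:ℝ)^lam) * ENNReal.ofReal (r^lam) from by
              rw [← ENNReal.ofReal_mul (Real.rpow_nonneg (by norm_num) _),
                ← Real.mul_rpow (by norm_num) hr.le]]
          ring
  have hE2bound : ENNReal.ofReal t * wInt n u E₂ ≤ CB * (N * ENNReal.ofReal (r ^ lam)) := by
    have hnl : (0:ℝ) ≤ (n:ℝ) - lam := by linarith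
    set S : ℝ := (2*‖x₀‖/r + 4) ^ ((n:ℝ) - lam) with hS
    have hfar : ∀ y ∈ ball x₀ r, maximal n f₂ y ≤ V1⁻¹ * N * ENNReal.ofReal S := by
      intro y hy
      rw [maximal]
      refine iSup_le fun z => iSup_le fun ρ => iSup_le fun hρ => iSup_le fun hyz => ?_
      by_cases hcase : ball z ρ ⊆ ball x₀ (2*r)
      · have hzero : (∫⁻ v in ball z ρ, ENNReal.ofReal |f₂ v|) = 0 := by
          have hptz : ∀ᵐ v ∂(volume.restrict (ball z ρ)),
              ENNReal.ofReal |f₂ v| = (fun _ => (0:ℝ≥0∞)) v := by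
            filter_upwards [ae_restrict_mem measurableSet_ball] with v hv
            have hv2 : f₂ v = 0 := Set.indicator_of_notMem (by simpa using hcase hv) f
            simp [hv2]
          rw [lintegral_congr_ae hptz, lintegral_zero]
        rw [hzero, mul_zero]
        exact zero_le
      · obtain ⟨v₀, hv₀z, hv₀x⟩ := Set.not_subset.1 hcase
        have hρr : r < 2*ρ := by
          have h1 : 2*r ≤ dist v₀ x₀ := not_lt.1 (fun h => hv₀x (mem_ball.2 h))
          have h2 : dist v₀ x₀ ≤ dist v₀ z + dist z y + dist y x₀ := dist_triangle4 v₀ z y x₀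
          have h3 : dist v₀ z < ρ := mem_ball.1 hv₀z
          have h4 : dist z y < ρ := by rw [dist_comm]; exact mem_ball.1 hyz
          have h5 : dist y x₀ < r := mem_ball.1 hy
          linarith
        set Λ : ℝ := ‖x₀‖ + r + 2*ρ with hΛ
        have hΛpos : 0 < Λ := by
          have := norm_nonneg x₀; rw [hΛ]; linarith
        have hae : ∀ᵐ v ∂(volume.restrict (ball z ρ)), ENNReal.ofReal |f₂ v| ≤
            ENNReal.ofReal (Λ ^ ((n:ℝ)-lam)) * ENNReal.ofReal (|f v| ^ (1:ℝ) * u v) := by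
          filter_upwards [ae_restrict_mem measurableSet_ball,
            S19.ae_restrict_ne_zero hn (ball z ρ)] with v hv hv0
          have hvn : 0 < ‖v‖ := norm_pos_iff.2 hv0
          have hvΛ : ‖v‖ ≤ Λ := by
            have h1 : ‖v - y‖ ≤ ‖v - z‖ + ‖z - y‖ := norm_sub_le_norm_sub_add_norm_sub v z y
            have h2 : ‖v - z‖ < ρ := by rw [← dist_eq_norm]; exact hv
            have h3 : ‖z - y‖ < ρ := by rw [← dist_eq_norm, dist_comm]; exact hyz
            have h4 : ‖y‖ < ‖x₀‖ + r := by
              have h5 := norm_sub_norm_le y x₀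
              have h6 : ‖y - x₀‖ < r := by rw [← dist_eq_norm]; exact hy
              linarith
            have h6 : ‖v‖ - ‖y‖ ≤ ‖v - y‖ := norm_sub_norm_le v y
            rw [hΛ]; linarith
          have habs2 : |f₂ v| ≤ |f v| := by
            rw [hf₂]
            by_cases hvv : v ∈ (ball x₀ (2*r))ᶜ <;>
              simp [Set.indicator_of_mem, Set.indicator_of_notMem, hvv, abs_nonneg]
          have hkey : |f v| ≤ Λ ^ ((n:ℝ)-lam) * (|f v| ^ (1:ℝ) * u v) := by
            simp only [Real.rpow_one, hu]
            have h7 : (1:ℝ) = ‖v‖ ^ ((n:ℝ)-lam) * ‖v‖ ^ (lam-(n:ℝ)) := by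
              rw [← Real.rpow_add hvn]; norm_num
            have h8 : ‖v‖ ^ ((n:ℝ)-lam) ≤ Λ ^ ((n:ℝ)-lam) :=
              Real.rpow_le_rpow (norm_nonneg _) hvΛ hnl
            have h9 : (0:ℝ) ≤ |f v| * ‖v‖ ^ (lam-(n:ℝ)) := by positivity
            calc |f v| = (|f v| * ‖v‖ ^ (lam-(n:ℝ))) * ‖v‖ ^ ((n:ℝ)-lam) := by
                  rw [mul_assoc, mul_comm (‖v‖ ^ (lam-(n:ℝ))), ← h7, mul_one]
              _ ≤ (|f v| * ‖v‖ ^ (lam-(n:ℝ))) * Λ ^ ((n:ℝ)-lam) :=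
                  mul_le_mul_of_nonneg_left h8 h9
              _ = Λ ^ ((n:ℝ)-lam) * (|f v| * ‖v‖ ^ (lam-(n:ℝ))) := by ring
          calc ENNReal.ofReal |f₂ v|
              ≤ ENNReal.ofReal (Λ ^ ((n:ℝ)-lam) * (|f v| ^ (1:ℝ) * u v)) :=
                ENNReal.ofReal_le_ofReal (le_trans habs2 hkey)
            _ = _ := ENNReal.ofReal_mul (Real.rpow_nonneg hΛpos.le _)
        have hint : (∫⁻ v in ball z ρ, ENNReal.ofReal |f₂ v|) ≤
            ENNReal.ofReal (Λ ^ ((n:ℝ)-lam)) * (N * ENNReal.ofReal (ρ ^ lam)) := by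
          calc (∫⁻ v in ball z ρ, ENNReal.ofReal |f₂ v|)
              ≤ ∫⁻ v in ball z ρ, ENNReal.ofReal (Λ ^ ((n:ℝ)-lam)) *
                  ENNReal.ofReal (|f v| ^ (1:ℝ) * u v) := lintegral_mono_ae hae
            _ = ENNReal.ofReal (Λ ^ ((n:ℝ)-lam)) *
                  ∫⁻ v in ball z ρ, ENNReal.ofReal (|f v| ^ (1:ℝ) * u v) :=
                lintegral_const_mul' _ _ ENNReal.ofReal_ne_top
            _ ≤ _ := mul_le_mul_right (hK1 z ρ hρ) _
        have hvol : volume (ball z ρ) = ENNReal.ofReal (ρ^(n:ℕ)) * V1 := S19.vol_ball hn z hρ.le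
        have hreal : Λ ^ ((n:ℝ)-lam) * ρ ^ lam ≤ ρ ^ (n:ℕ) * S := by
          have hΛle : Λ ≤ (2*‖x₀‖/r + 4) * ρ := by
            have h1 : ‖x₀‖ ≤ 2*‖x₀‖*ρ/r := by
              rw [le_div_iff₀ hr]
              nlinarith [mul_le_mul_of_nonneg_left hρr.le (norm_nonneg x₀)]
            have h2 : (2*‖x₀‖/r + 4) * ρ = 2*‖x₀‖*ρ/r + 4*ρ := by ring
            rw [h2, hΛ]; linarith
          have h3 : Λ ^ ((n:ℝ)-lam) ≤ ((2*‖x₀‖/r + 4) * ρ) ^ ((n:ℝ)-lam) :=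
            Real.rpow_le_rpow hΛpos.le hΛle hnl
          have h4 : ((2*‖x₀‖/r + 4) * ρ) ^ ((n:ℝ)-lam) = S * ρ ^ ((n:ℝ)-lam) := by
            rw [Real.mul_rpow (by positivity) hρ.le]
          have h5 : S * ρ ^ ((n:ℝ)-lam) * ρ ^ lam = ρ ^ (n:ℕ) * S := by
            rw [mul_assoc, ← Real.rpow_add hρ, ← Real.rpow_natCast ρ n]
            rw [show (n:ℝ) - lam + lam = (n:ℝ) by ring]
            ring
          have h6 : (0:ℝ) ≤ ρ ^ lam := Real.rpow_nonneg hρ.le _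
          calc Λ ^ ((n:ℝ)-lam) * ρ ^ lam
              ≤ S * ρ ^ ((n:ℝ)-lam) * ρ ^ lam := by
                rw [← h4]; exact mul_le_mul_of_nonneg_right h3 h6
            _ = ρ ^ (n:ℕ) * S := h5
        calc (volume (ball z ρ))⁻¹ * (∫⁻ v in ball z ρ, ENNReal.ofReal |f₂ v|)
            ≤ (ENNReal.ofReal (ρ^(n:ℕ)) * V1)⁻¹ *
                (ENNReal.ofReal (Λ ^ ((n:ℝ)-lam)) * (N * ENNReal.ofReal (ρ ^ lam))) := by
              rw [hvol]; exact mul_le_mul_right hint _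
          _ = V1⁻¹ * N * ((ENNReal.ofReal (ρ^(n:ℕ)))⁻¹ *
                (ENNReal.ofReal (Λ ^ ((n:ℝ)-lam)) * ENNReal.ofReal (ρ ^ lam))) := by
              rw [ENNReal.mul_inv (Or.inl ((ENNReal.ofReal_pos.2 (by positivity)).ne'))
                (Or.inl ENNReal.ofReal_ne_top)]
              ring
          _ ≤ V1⁻¹ * N * ENNReal.ofReal S := by
              refine mul_le_mul_right ?_ _
              rw [ENNReal.inv_mul_le_iff ((ENNReal.ofReal_pos.2 (by positivity)).ne')
                ENNReal.ofReal_ne_top,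
                ← ENNReal.ofReal_mul (Real.rpow_nonneg hΛpos.le _),
                ← ENNReal.ofReal_mul (by positivity)]
              exact ENNReal.ofReal_le_ofReal hreal
    by_cases hcs : ENNReal.ofReal (t/2) < V1⁻¹ * N * ENNReal.ofReal S
    · have ht' : ENNReal.ofReal t ≤ 2 * (V1⁻¹ * N * ENNReal.ofReal S) := by
        rw [S19.two_ofReal_half]
        exact mul_le_mul_right hcs.le _
      have hK4 := S19.K4 hn hlam0 hlam x₀ hr
      rw [← hu] at hK4
      calc ENNReal.ofReal t * wInt n u E₂
          ≤ (2 * (V1⁻¹ * N * ENNReal.ofReal S)) * wInt n u (ball x₀ r) :=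
            mul_le_mul ht' (lintegral_mono_set fun y hy => hy.1) zero_le zero_le
        _ = 2 * V1⁻¹ * N * (ENNReal.ofReal S * wInt n u (ball x₀ r)) := by ring
        _ ≤ 2 * V1⁻¹ * N * (S19.C2 n lam * ENNReal.ofReal (r ^ lam)) :=
            mul_le_mul_right hK4 _
        _ = 2 * (V1⁻¹ * S19.C2 n lam) * (N * ENNReal.ofReal (r ^ lam)) := by ring
        _ ≤ CB * (N * ENNReal.ofReal (r ^ lam)) := by
            rw [hCB]
            refine mul_le_mul_left (mul_le_mul_right ?_ _) _
            rw [mul_assoc]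
            exact le_mul_of_one_le_left' one_le_two
    · push_neg at hcs
      have hempty : E₂ = ∅ := by
        rw [Set.eq_empty_iff_forall_notMem]
        rintro y ⟨hyb, hyt⟩
        exact absurd hyt (not_lt.2 ((hfar y hyb).trans hcs))
      rw [hempty]
      have hz : wInt n u (∅ : Set (Euc n)) = 0 := by
        rw [wInt, Measure.restrict_empty, lintegral_zero_measure]
      rw [hz, mul_zero]
      exact zero_le
  have hcancel : ENNReal.ofReal (r ^ (-lam)) * ENNReal.ofReal (r ^ lam) = 1 := by
    rw [← ENNReal.ofReal_mul (Real.rpow_nonneg hr.le _), ← Real.rpow_add hr]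
    simp
  calc ENNReal.ofReal t * ENNReal.ofReal (r ^ (-lam)) * wInt n u E
      = ENNReal.ofReal (r ^ (-lam)) * (ENNReal.ofReal t * wInt n u E) := by ring
    _ ≤ ENNReal.ofReal (r ^ (-lam)) * (ENNReal.ofReal t * (wInt n u E₁ + wInt n u E₂)) := by
        exact mul_le_mul_right (mul_le_mul_right hwE _) _
    _ = ENNReal.ofReal (r ^ (-lam)) *
          (ENNReal.ofReal t * wInt n u E₁ + ENNReal.ofReal t * wInt n u E₂) := by ring
    _ ≤ ENNReal.ofReal (r ^ (-lam)) * ((CA + CB) * (N * ENNReal.ofReal (r ^ lam))) := by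
        refine mul_le_mul_right ?_ _
        calc ENNReal.ofReal t * wInt n u E₁ + ENNReal.ofReal t * wInt n u E₂
            ≤ CA * (N * ENNReal.ofReal (r ^ lam)) + CB * (N * ENNReal.ofReal (r ^ lam)) :=
              add_le_add hE1bound hE2bound
          _ = (CA + CB) * (N * ENNReal.ofReal (r ^ lam)) := by ring
    _ = (CA + CB) * N * (ENNReal.ofReal (r ^ (-lam)) * ENNReal.ofReal (r ^ lam)) := by ring
    _ = (CA + CB) * N := by rw [hcancel, mul_one]
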